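/- The Al-Salam–Carlitz II polynomial P_n(x) = (-c)^n q^(-n(n-1)/2) ₂φ₀(q^(-n), cx; —; q, d q^n/c) is symmetric under interchange of c and d: d^n V_n^{(c/d)}(cx; q) = c^n V_n^{(d/c)}(dx; q), where V_n^{(a)}(z;q) = (-a)^n q^(-n(n-1)/2) ₂φ₀(q^(-n), z; —; q, q^n/a). -/

import Mathlib

open scoped BigOperators

/-- q-Pochhammer infinite product `(a;q)_∞`. -/
noncomputable def qp (q a : ℂ) : ℂ := ∏' n : ℕ, (1 - a * q ^ n)

/-- q-Pochhammer `(a;q)_k`. -/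
noncomputable def qpn (q a : ℂ) (k : ℕ) : ℂ := ∏ j ∈ Finset.range k, (1 - a * q ^ j)

/-- theta function `θ(x;q) = (x;q)_∞ (q/x;q)_∞`. -/
noncomputable def theta (q x : ℂ) : ℂ := qp q x * qp q (q / x)

/-- the `₁φ₁(a;b;q,z)` series. -/
noncomputable def phi11 (q a b z : ℂ) : ℂ :=
  ∑' n : ℕ, qpn q a n / (qpn q q n * qpn q b n) * (-1) ^ n * q ^ (n * (n - 1) / 2) * z ^ n

/-- the terminating `₂φ₀(q^(-n),B;—;q,z)` series (Gasper–Rahman convention). -/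
noncomputable def phi20 (q : ℂ) (n : ℕ) (B z : ℂ) : ℂ :=
  ∑ k ∈ Finset.range (n + 1),
    qpn q ((q ^ n)⁻¹) k * qpn q B k / qpn q q k * (-1) ^ k * (q ^ (k * (k - 1) / 2))⁻¹ * z ^ k

/-- Al-Salam–Carlitz II polynomial `V_n^{(a)}(z;q)`. -/
noncomputable def ASCII (q : ℂ) (n : ℕ) (a z : ℂ) : ℂ :=
  (-a) ^ n * ((q ^ (n * (n - 1) / 2))⁻¹) * phi20 q n z (q ^ n / a)


namespace ASCAux

abbrev E (k : ℕ) : ℕ := k * (k - 1) / 2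

lemma E_succ (k : ℕ) : E (k + 1) = E k + k := by
  cases k with
  | zero => rfl
  | succ m =>
    show (m + 2) * (m + 1) / 2 = (m + 1) * m / 2 + (m + 1)
    have h : (m + 2) * (m + 1) = (m + 1) * m + (m + 1) * 2 := by ring
    rw [h, Nat.add_mul_div_right _ _ (by norm_num : 0 < 2)]

noncomputable def P (q : ℂ) (k : ℕ) : ℂ := qpn q q k

lemma qpn_zero (q b : ℂ) : qpn q b 0 = 1 := by simp [qpn]

lemma qpn_succ (q b : ℂ) (k : ℕ) : qpn q b (k + 1) = qpn q b k * (1 - b * q ^ k) := by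
  rw [qpn, qpn, Finset.prod_range_succ]

lemma P_succ (q : ℂ) (k : ℕ) : P q (k + 1) = P q k * (1 - q ^ (k + 1)) := by
  rw [P, qpn_succ, ← P]; ring

lemma P_ne {q : ℝ} (hq0 : 0 < q) (hq1 : q < 1) (k : ℕ) : P (q : ℂ) k ≠ 0 := by
  induction k with
  | zero => simp [P, qpn_zero]
  | succ m ih =>
    rw [P_succ]
    refine mul_ne_zero ih ?_
    have h1 : (q : ℝ) ^ (m + 1) < 1 := pow_lt_one₀ hq0.le hq1 (Nat.succ_ne_zero m)
    have h2 : ((1 : ℂ) - (q : ℂ) ^ (m + 1)) = ((1 - q ^ (m + 1) : ℝ) : ℂ) := by push_cast; ring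
    rw [h2]
    exact_mod_cast ne_of_gt (sub_pos.2 h1)

noncomputable def Qb (q : ℂ) (n k : ℕ) : ℂ := P q n / (P q k * P q (n - k))

noncomputable def Cb (q : ℂ) (n k : ℕ) : ℂ := if k ≤ n then Qb q n k else 0

noncomputable def K (q : ℂ) (N : ℕ) (a b : ℂ) : ℂ :=
  ∑ m ∈ Finset.range (N + 1), Qb q N m * a ^ (N - m) * b ^ m

lemma P_zero (q : ℂ) : P q 0 = 1 := by simp [P, qpn_zero]

lemma Qb_zero {q : ℝ} (hq0 : 0 < q) (hq1 : q < 1) (n : ℕ) : Qb (q : ℂ) n 0 = 1 := by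
  rw [Qb, P_zero, Nat.sub_zero, one_mul, div_self (P_ne hq0 hq1 n)]

lemma Qb_self {q : ℝ} (hq0 : 0 < q) (hq1 : q < 1) (n : ℕ) : Qb (q : ℂ) n n = 1 := by
  rw [Qb, Nat.sub_self, P_zero, mul_one, div_self (P_ne hq0 hq1 n)]

lemma Qb_symm {q : ℝ} (hq0 : 0 < q) (hq1 : q < 1) {n m : ℕ} (hm : m ≤ n) :
    Qb (q : ℂ) n (n - m) = Qb (q : ℂ) n m := by
  rw [Qb, Qb, Nat.sub_sub_self hm, mul_comm]

lemma K_symm {q : ℝ} (hq0 : 0 < q) (hq1 : q < 1) (N : ℕ) (a b : ℂ) :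
    K (q : ℂ) N a b = K (q : ℂ) N b a := by
  rw [K, K, ← Finset.sum_range_reflect]
  refine Finset.sum_congr rfl fun m hm => ?_
  have hmN : m ≤ N := by simpa [Nat.lt_succ_iff] using hm
  have h1 : N + 1 - 1 - m = N - m := by omega
  have h2 : N - (N - m) = m := Nat.sub_sub_self hmN
  rw [h1, h2, Qb_symm hq0 hq1 hmN]
  ring

end ASCAux

namespace ASCAux

lemma Cb_zero {q : ℝ} (hq0 : 0 < q) (hq1 : q < 1) (n : ℕ) : Cb (q : ℂ) n 0 = 1 := by
  rw [Cb, if_pos (Nat.zero_le n), Qb_zero hq0 hq1]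

lemma Cb_of_gt {q : ℂ} {n k : ℕ} (h : n < k) : Cb q n k = 0 := by
  rw [Cb, if_neg (by omega)]

lemma pascal {q : ℝ} (hq0 : 0 < q) (hq1 : q < 1) (k i : ℕ) :
    Cb (q : ℂ) (k + 1) (i + 1) = Cb (q : ℂ) k (i + 1) + (q : ℂ) ^ (k - i) * Cb (q : ℂ) k i := by
  rcases lt_trichotomy (i + 1) (k + 1) with h | h | h
  · -- i + 1 ≤ k
    have hik : i + 1 ≤ k := by omega
    obtain ⟨a, rfl⟩ : ∃ a, k = i + 1 + a := ⟨k - (i + 1), by omega⟩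
    rw [Cb, if_pos (by omega), Cb, if_pos (by omega), Cb, if_pos (by omega)]
    rw [Qb, Qb, Qb]
    have e1 : i + 1 + a + 1 - (i + 1) = a + 1 := by omega
    have e2 : i + 1 + a - (i + 1) = a := by omega
    have e3 : i + 1 + a - i = a + 1 := by omega
    rw [e1, e2, e3]
    rw [P_succ (q:ℂ) (i + 1 + a), P_succ (q:ℂ) i, P_succ (q:ℂ) a]
    have hP1 := P_ne hq0 hq1 (i + 1 + a)
    have hP2 := P_ne hq0 hq1 i
    have hP3 := P_ne hq0 hq1 a
    have hf1 : (1 : ℂ) - (q:ℂ) ^ (i + 1) ≠ 0 := by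
      have := P_ne hq0 hq1 (i + 1); rw [P_succ] at this; exact right_ne_zero_of_mul this
    have hf2 : (1 : ℂ) - (q:ℂ) ^ (a + 1) ≠ 0 := by
      have := P_ne hq0 hq1 (a + 1); rw [P_succ] at this; exact right_ne_zero_of_mul this
    have hpows : (q:ℂ) ^ (i + 1 + a + 1) = (q:ℂ) ^ (i + 1) * (q:ℂ) ^ (a + 1) := by
      rw [show i + 1 + a + 1 = (i + 1) + (a + 1) by omega, pow_add]
    field_simp
    rw [hpows]
    ring
  · -- i = k
    have : i = k := by omega
    subst this
    rw [Cb, if_pos le_rfl, Cb, if_neg (by omega), Cb, if_pos le_rfl,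
      Qb_self hq0 hq1, Qb_self hq0 hq1]
    simp
  · -- i > k
    rw [Cb_of_gt (by omega), Cb_of_gt (by omega), Cb_of_gt (by omega)]
    simp

lemma qbt {q : ℝ} (hq0 : 0 < q) (hq1 : q < 1) (b : ℂ) (k : ℕ) :
    qpn (q : ℂ) b k = ∑ j ∈ Finset.range (k + 1), Cb (q : ℂ) k j * (q : ℂ) ^ E j * (-b) ^ j := by
  induction k with
  | zero => simp [qpn_zero, Cb_zero hq0 hq1, E]
  | succ k ih =>
    rw [Finset.sum_range_succ']
    have hterm : ∀ i ∈ Finset.range (k + 1),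
        Cb (q : ℂ) (k + 1) (i + 1) * (q : ℂ) ^ E (i + 1) * (-b) ^ (i + 1)
        = Cb (q : ℂ) k (i + 1) * (q : ℂ) ^ E (i + 1) * (-b) ^ (i + 1)
          + (-b) * (q : ℂ) ^ k * (Cb (q : ℂ) k i * (q : ℂ) ^ E i * (-b) ^ i) := by
      intro i hi
      have hik : i ≤ k := by simpa [Nat.lt_succ_iff] using hi
      have hpow : (q : ℂ) ^ (k - i) * (q : ℂ) ^ E (i + 1) = (q : ℂ) ^ E i * (q : ℂ) ^ k := by
        rw [E_succ, ← pow_add, ← pow_add]; congr 1; omega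
      rw [pascal hq0 hq1 k i]
      calc (Cb (q:ℂ) k (i+1) + (q:ℂ) ^ (k - i) * Cb (q:ℂ) k i) * (q:ℂ) ^ E (i+1) * (-b) ^ (i+1)
          = Cb (q:ℂ) k (i+1) * (q:ℂ) ^ E (i+1) * (-b) ^ (i+1)
            + Cb (q:ℂ) k i * ((q:ℂ) ^ (k - i) * (q:ℂ) ^ E (i+1)) * (-b) ^ (i + 1) := by ring
        _ = _ := by rw [hpow, pow_succ]; ring
    rw [Finset.sum_congr rfl hterm, Finset.sum_add_distrib, ← Finset.mul_sum, ← ih]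
    have h2 := Finset.sum_range_succ'
      (fun j => Cb (q : ℂ) k j * (q : ℂ) ^ E j * (-b) ^ j) (k + 1)
    have h3 : ∑ j ∈ Finset.range (k + 1 + 1), Cb (q : ℂ) k j * (q : ℂ) ^ E j * (-b) ^ j
        = qpn (q : ℂ) b k := by
      rw [Finset.sum_range_succ, Cb_of_gt (by omega : k < k + 1), ← ih]; ring
    rw [h3] at h2
    have hA : ∑ i ∈ Finset.range (k + 1),
        Cb (q : ℂ) k (i + 1) * (q : ℂ) ^ E (i + 1) * (-b) ^ (i + 1)
        = qpn (q : ℂ) b k - Cb (q : ℂ) k 0 * (q : ℂ) ^ E 0 * (-b) ^ 0 :=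
      eq_sub_of_add_eq h2.symm
    rw [hA, Cb_zero hq0 hq1, Cb_zero hq0 hq1, qpn_succ]
    norm_num [E]
    ring

end ASCAux

namespace ASCAux

lemma Qb_mul {q : ℝ} (hq0 : 0 < q) (hq1 : q < 1) {n j m : ℕ} (h : j + m ≤ n) :
    Qb (q : ℂ) n (j + m) * Qb (q : ℂ) (j + m) j = Qb (q : ℂ) n j * Qb (q : ℂ) (n - j) m := by
  obtain ⟨t, rfl⟩ : ∃ t, n = j + m + t := ⟨n - (j + m), by omega⟩
  have e1 : j + m + t - (j + m) = t := by omega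
  have e2 : j + m - j = m := by omega
  have e3 : j + m + t - j = m + t := by omega
  have e4 : m + t - m = t := by omega
  rw [Qb, Qb, Qb, Qb, e1, e2, e3, e4]
  have h1 := P_ne hq0 hq1 (j + m)
  have h2 := P_ne hq0 hq1 j
  have h3 := P_ne hq0 hq1 m
  have h4 := P_ne hq0 hq1 t
  have h5 := P_ne hq0 hq1 (m + t)
  field_simp

lemma main {q : ℝ} (hq0 : 0 < q) (hq1 : q < 1) (n : ℕ) (c d x : ℂ) (hc : c ≠ 0) :
    (-c) ^ n * ∑ k ∈ Finset.range (n + 1), Qb (q : ℂ) n k * qpn (q : ℂ) (c * x) k * (d / c) ^ k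
    = ∑ j ∈ Finset.range (n + 1), Qb (q : ℂ) n j * (q : ℂ) ^ E j * (-1) ^ (n + j) * x ^ j
        * (c * d) ^ j * K (q : ℂ) (n - j) c d := by
  have step1 : ∑ k ∈ Finset.range (n + 1), Qb (q : ℂ) n k * qpn (q : ℂ) (c * x) k * (d / c) ^ k
      = ∑ k ∈ Finset.range (n + 1), ∑ j ∈ Finset.range (n + 1),
          Qb (q : ℂ) n k * Cb (q : ℂ) k j * (q : ℂ) ^ E j * (-(c * x)) ^ j * (d / c) ^ k := by
    refine Finset.sum_congr rfl fun k hk => ?_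
    have hkn : k ≤ n := by simpa [Nat.lt_succ_iff] using hk
    rw [qbt hq0 hq1 (c * x) k, Finset.mul_sum, Finset.sum_mul]
    have hre : ∀ i ∈ Finset.range (k + 1),
        Qb (q : ℂ) n k * (Cb (q : ℂ) k i * (q : ℂ) ^ E i * (-(c * x)) ^ i) * (d / c) ^ k
        = Qb (q : ℂ) n k * Cb (q : ℂ) k i * (q : ℂ) ^ E i * (-(c * x)) ^ i * (d / c) ^ k :=
      fun i _ => by ring
    rw [Finset.sum_congr rfl hre]
    apply Finset.sum_subset (Finset.range_subset_range.mpr (by omega : k + 1 ≤ n + 1))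
    intro j hj hj2
    rw [Finset.mem_range] at hj hj2
    rw [Cb_of_gt (by omega : k < j)]
    ring
  rw [step1, Finset.sum_comm, Finset.mul_sum]
  refine Finset.sum_congr rfl fun j hj => ?_
  have hjn : j ≤ n := by simpa [Nat.lt_succ_iff] using hj
  have step2 : ∑ k ∈ Finset.range (n + 1),
        Qb (q : ℂ) n k * Cb (q : ℂ) k j * (q : ℂ) ^ E j * (-(c * x)) ^ j * (d / c) ^ k
      = ∑ m ∈ Finset.range (n - j + 1),
        Qb (q : ℂ) n (j + m) * Cb (q : ℂ) (j + m) j * (q : ℂ) ^ E j * (-(c * x)) ^ j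
          * (d / c) ^ (j + m) := by
    rw [← Finset.sum_subset
      (by intro k hk; rw [Finset.mem_Ico] at hk; rw [Finset.mem_range]; omega :
        Finset.Ico j (n + 1) ⊆ Finset.range (n + 1))
      (by
        intro k hk hk2
        rw [Finset.mem_Ico] at hk2
        rw [Finset.mem_range] at hk
        rw [Cb_of_gt (by omega : k < j)]; ring)]
    rw [Finset.sum_Ico_eq_sum_range, show n + 1 - j = n - j + 1 from by omega]
  rw [step2, K, Finset.mul_sum, Finset.mul_sum]
  refine Finset.sum_congr rfl fun m hm => ?_
  have hmn : m ≤ n - j := by simpa [Nat.lt_succ_iff] using hm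
  have hjm : j + m ≤ n := by omega
  rw [show Cb (q : ℂ) (j + m) j = Qb (q : ℂ) (j + m) j from by rw [Cb, if_pos (by omega)]]
  have hQ : Qb (q : ℂ) n (j + m) * Qb (q : ℂ) (j + m) j
      = Qb (q : ℂ) n j * Qb (q : ℂ) (n - j) m := Qb_mul hq0 hq1 hjm
  obtain ⟨t, hnt⟩ : ∃ t, n = j + m + t := ⟨n - (j + m), by omega⟩
  have e5 : n - j - m = t := by omega
  have hscal : (-c) ^ n * ((-(c * x)) ^ j * (d / c) ^ (j + m))
      = (-1) ^ (n + j) * x ^ j * (c * d) ^ j * (c ^ (n - j - m) * d ^ m) := by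
    subst hnt
    rw [e5, neg_pow, neg_pow]
    rw [div_pow, pow_add c (j + m) t]
    have hcjm : c ^ (j + m) ≠ 0 := pow_ne_zero _ hc
    field_simp
    ring
  calc (-c) ^ n * (Qb (q : ℂ) n (j + m) * Qb (q : ℂ) (j + m) j * (q : ℂ) ^ E j
          * (-(c * x)) ^ j * (d / c) ^ (j + m))
      = (Qb (q : ℂ) n (j + m) * Qb (q : ℂ) (j + m) j) * (q : ℂ) ^ E j
          * ((-c) ^ n * ((-(c * x)) ^ j * (d / c) ^ (j + m))) := by ring
    _ = (Qb (q : ℂ) n j * Qb (q : ℂ) (n - j) m) * (q : ℂ) ^ E j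
          * ((-1) ^ (n + j) * x ^ j * (c * d) ^ j * (c ^ (n - j - m) * d ^ m)) := by
          rw [hQ, hscal]
    _ = _ := by ring

end ASCAux

namespace ASCAux

lemma invpoch {q : ℝ} (hq0 : 0 < q) (hq1 : q < 1) (n : ℕ) :
    ∀ k, k ≤ n → qpn (q : ℂ) (((q : ℂ) ^ n)⁻¹) k * (-1) ^ k * (q : ℂ) ^ (n * k) * P (q : ℂ) (n - k)
      = (q : ℂ) ^ E k * P (q : ℂ) n := by
  intro k
  induction k with
  | zero => intro _; simp [qpn_zero, E]
  | succ k ih =>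
    intro hk1
    obtain ⟨s, rfl⟩ : ∃ s, n = k + 1 + s := ⟨n - (k + 1), by omega⟩
    have IH := ih (by omega)
    rw [show k + 1 + s - k = s + 1 from by omega, P_succ] at IH
    have hQ : (q : ℂ) ≠ 0 := by exact_mod_cast ne_of_gt hq0
    have hQn : ((q : ℂ)) ^ (k + 1 + s) ≠ 0 := pow_ne_zero _ hQ
    have h1 : (((q : ℂ)) ^ (k + 1 + s))⁻¹ * ((q : ℂ)) ^ (k + 1 + s) = 1 := inv_mul_cancel₀ hQn
    have hn : ((q : ℂ)) ^ (k + 1 + s) = ((q : ℂ)) ^ k * ((q : ℂ)) ^ (s + 1) := by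
      rw [show k + 1 + s = k + (s + 1) from by omega, pow_add]
    rw [qpn_succ, show k + 1 + s - (k + 1) = s from by omega, E_succ]
    set I : ℂ := (((q : ℂ)) ^ (k + 1 + s))⁻¹ with hI
    set u : ℂ := qpn (q : ℂ) I k with hu
    clear_value I u
    linear_combination ((q : ℂ)) ^ k * IH
      + (u * (-1) ^ k * ((q : ℂ)) ^ ((k + 1 + s) * k) * P (q : ℂ) s * ((q : ℂ)) ^ k) * h1
      - (u * (-1) ^ k * ((q : ℂ)) ^ ((k + 1 + s) * k) * P (q : ℂ) s) * hn

lemma phi20_eq {q : ℝ} (hq0 : 0 < q) (hq1 : q < 1) (n : ℕ) (c d x : ℂ)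
    (hc : c ≠ 0) (hd : d ≠ 0) :
    phi20 (q : ℂ) n (c * x) ((q : ℂ) ^ n / (c / d))
    = ∑ k ∈ Finset.range (n + 1), Qb (q : ℂ) n k * qpn (q : ℂ) (c * x) k * (d / c) ^ k := by
  rw [phi20]
  refine Finset.sum_congr rfl fun k hk => ?_
  have hkn : k ≤ n := by simpa [Nat.lt_succ_iff] using hk
  have h := invpoch hq0 hq1 n k hkn
  have hQ : (q : ℂ) ≠ 0 := by exact_mod_cast ne_of_gt hq0
  have hQn : ((q : ℂ)) ^ n ≠ 0 := pow_ne_zero _ hQ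
  have hQE : ((q : ℂ)) ^ E k ≠ 0 := pow_ne_zero _ hQ
  have hPk := P_ne hq0 hq1 k
  have hPnk := P_ne hq0 hq1 (n - k)
  have hPn := P_ne hq0 hq1 n
  rw [show qpn (q : ℂ) (q : ℂ) k = P (q : ℂ) k from rfl, Qb,
    show (q : ℂ) ^ (k * (k - 1) / 2) = (q : ℂ) ^ E k from rfl]
  field_simp
  ring_nf
  ring_nf at h
  linear_combination (qpn (q : ℂ) (c * x) k * d ^ k * c⁻¹ ^ k) * h

end ASCAux

open ASCAux in
/-- `d^n V_n^{(c/d)}(cx;q) = c^n V_n^{(d/c)}(dx;q)`. -/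
theorem ASCII_cd_symm (q : ℝ) (hq0 : 0 < q) (hq1 : q < 1) (n : ℕ) (c d x : ℂ)
    (hc : c ≠ 0) (hd : d ≠ 0) :
    d ^ n * ASCII (q : ℂ) n (c / d) (c * x) = c ^ n * ASCII (q : ℂ) n (d / c) (d * x) := by
  have hcd : (-(c / d)) ^ n * d ^ n = (-c) ^ n := by
    rw [← mul_pow]; congr 1; field_simp
  have hdc : (-(d / c)) ^ n * c ^ n = (-d) ^ n := by
    rw [← mul_pow]; congr 1; field_simp
  calc d ^ n * ASCII (q : ℂ) n (c / d) (c * x)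
      = ((q : ℂ) ^ (n * (n - 1) / 2))⁻¹ * ((-c) ^ n
          * ∑ k ∈ Finset.range (n + 1), Qb (q : ℂ) n k * qpn (q : ℂ) (c * x) k * (d / c) ^ k) := by
        rw [ASCII, phi20_eq hq0 hq1 n c d x hc hd, ← hcd]
        ring
    _ = ((q : ℂ) ^ (n * (n - 1) / 2))⁻¹ * ∑ j ∈ Finset.range (n + 1),
          Qb (q : ℂ) n j * (q : ℂ) ^ E j * (-1) ^ (n + j) * x ^ j * (c * d) ^ j
            * K (q : ℂ) (n - j) c d := by
        rw [main hq0 hq1 n c d x hc]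
    _ = ((q : ℂ) ^ (n * (n - 1) / 2))⁻¹ * ∑ j ∈ Finset.range (n + 1),
          Qb (q : ℂ) n j * (q : ℂ) ^ E j * (-1) ^ (n + j) * x ^ j * (d * c) ^ j
            * K (q : ℂ) (n - j) d c := by
        congr 1
        refine Finset.sum_congr rfl fun j hj => ?_
        rw [mul_comm c d, K_symm hq0 hq1]
    _ = ((q : ℂ) ^ (n * (n - 1) / 2))⁻¹ * ((-d) ^ n
          * ∑ k ∈ Finset.range (n + 1), Qb (q : ℂ) n k * qpn (q : ℂ) (d * x) k * (c / d) ^ k) := by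
        rw [main hq0 hq1 n d c x hd]
    _ = c ^ n * ASCII (q : ℂ) n (d / c) (d * x) := by
        rw [ASCII, phi20_eq hq0 hq1 n d c x hd hc, ← hdc]
        ring
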